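/- Let γ be an R-regular arclength-parametrized C^1 simple curve tangentially attached to ℝ₊ with modulus of continuity ω of γ' satisfying ω(R) ≤ 1/5, η = √γ with capacity parametrization. Then for all t with corresponding arclength s ∈ [0,R], the tangent angle satisfies |arg(η'(t)) − π/2| ≤ 2ω(s), where arg(γ'(s)) is measured so that arg(γ'(0)) = π. -/

import Mathlib

open Set Filter Complex

/-- The branch of the square root mapping `ℂ ∖ ℝ₊` into the upper half-plane. -/
noncomputable def sqrtH (z : ℂ) : ℂ := Complex.I * ((-z) ^ ((1:ℂ)/2))

private lemma abs_arg_le_im_div_re {z : ℂ} (hz : 0 < z.re) : |z.arg| ≤ |z.im| / z.re := by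
  have hlt : |z.arg| < Real.pi / 2 := Complex.abs_arg_lt_pi_div_two_iff.2 (Or.inl hz)
  have htan : Real.tan z.arg = z.im / z.re := Complex.tan_arg z
  rcases le_or_gt 0 z.arg with h | h
  · have him : 0 ≤ z.im := by
      by_contra him
      exact absurd (Complex.arg_neg_iff.2 (lt_of_not_ge him)) (not_lt.2 h)
    have : z.arg ≤ Real.tan z.arg := Real.le_tan h (by rwa [_root_.abs_of_nonneg h] at hlt)
    rw [htan] at this
    rw [_root_.abs_of_nonneg h, _root_.abs_of_nonneg him]
    exact this
  · have him : z.im < 0 := Complex.arg_neg_iff.1 h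
    have : -z.arg ≤ Real.tan (-z.arg) :=
      Real.le_tan (by linarith) (by rwa [_root_.abs_of_neg h] at hlt)
    rw [Real.tan_neg, htan] at this
    rw [_root_.abs_of_neg h, _root_.abs_of_neg him, neg_div]
    exact this

private lemma arg_cpow_half (z : ℂ) : (z ^ ((1:ℂ)/2)).arg = z.arg / 2 := by
  rcases eq_or_ne z 0 with rfl | hz
  · rw [Complex.zero_cpow (by norm_num : (1:ℂ)/2 ≠ 0)]
    simp
  have h : ((1:ℂ)/2) = ((1/2 : ℝ) : ℂ) := by norm_num
  rw [h, Complex.cpow_ofReal]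
  have hr : 0 < ‖z‖ ^ (1/2 : ℝ) :=
    Real.rpow_pos_of_pos (norm_pos_iff.mpr hz) _
  have hθ : z.arg * (1/2) ∈ Set.Ioc (-Real.pi) Real.pi := by
    constructor
    · nlinarith [Complex.neg_pi_lt_arg z, Real.pi_pos]
    · nlinarith [Complex.arg_le_pi z, Real.pi_pos]
  have := Complex.arg_mul_cos_add_sin_mul_I hr hθ
  rw [← Complex.ofReal_cos, ← Complex.ofReal_sin] at this
  rw [this]
  ring

/-- For an `R`-regular arclength-parametrized `C^1` simple curve `γ`
tangentially attached to `ℝ₊` with `ω(R) ≤ 1/5`, the tangent direction of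
`η = √γ` satisfies `|arg(η') − π/2| ≤ 2ω(s)` for arclength `s ∈ (0,R]`.
(The argument of the tangent is independent of the parametrization, so it is
computed using the arclength parameter.) -/
theorem tangent_angle_bound (S R : ℝ) (hS : 0 < S) (hR : 0 < R) (hRS : R ≤ S)
    (γ γ' : ℝ → ℂ) (ω : ℝ → ℝ)
    (hωmono : ∀ a b : ℝ, 0 ≤ a → a ≤ b → ω a ≤ ω b)
    (hderiv : ∀ s ∈ Set.Icc (0:ℝ) S, HasDerivWithinAt γ (γ' s) (Set.Icc 0 S) s)
    (hunit : ∀ s ∈ Set.Icc (0:ℝ) S, ‖γ' s‖ = 1)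
    (hmod : ∀ s ∈ Set.Icc (0:ℝ) S, ∀ s' ∈ Set.Icc (0:ℝ) S,
      ‖γ' s - γ' s'‖ ≤ ω |s - s'|)
    (hγ0 : γ 0 = 0) (hγ'0 : γ' 0 = -1)
    (hinj : Set.InjOn γ (Set.Icc 0 S))
    (havoid : ∀ s ∈ Set.Ioc (0:ℝ) S, ¬ (0 ≤ (γ s).re ∧ (γ s).im = 0))
    (hreg : ∀ s ∈ Set.Icc (0:ℝ) S, ∀ r : ℝ, 0 < r → r ≤ R →
      IsConnected (Metric.closedBall (γ s) r ∩
        ((fun u : ℝ => if 0 ≤ u then γ u else ((-u : ℝ) : ℂ)) '' Set.Iic S)))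
    (hωR : ω R ≤ 1/5) :
    ∀ s ∈ Set.Ioc (0:ℝ) R,
      |Complex.arg (derivWithin (fun u => sqrtH (γ u)) (Set.Icc 0 S) s)
        - Real.pi / 2| ≤ 2 * ω s := by
  intro s hs
  obtain ⟨hs0, hsR⟩ := hs
  have hsS' : s ≤ S := hsR.trans hRS
  have hsS : s ∈ Set.Icc (0:ℝ) S := ⟨hs0.le, hsS'⟩
  have h0S : (0:ℝ) ∈ Set.Icc (0:ℝ) S := ⟨le_rfl, hS.le⟩
  set δ := ω s with hδdef
  -- basic bounds on δ
  have hA1 : ‖γ' s + 1‖ ≤ δ := by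
    have := hmod s hsS 0 h0S
    rw [hγ'0, sub_neg_eq_add, sub_zero, _root_.abs_of_pos hs0] at this
    exact this
  have hδ0 : 0 ≤ δ := le_trans (norm_nonneg _) hA1
  have hδ5 : δ ≤ 1/5 := le_trans (hωmono s R hs0.le hsR) hωR
  -- the integral estimate ‖γ s + s‖ ≤ s * δ
  have hγs : ‖γ s + s‖ ≤ δ * s := by
    have key := (convex_Icc (0:ℝ) s).norm_image_sub_le_of_norm_hasDerivWithin_le
      (f := fun u : ℝ => γ u + (u : ℂ)) (f' := fun u : ℝ => γ' u + 1) (C := δ)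
      (fun u hu => by
        have huS : u ∈ Set.Icc (0:ℝ) S := ⟨hu.1, hu.2.trans hsS'⟩
        have hid : HasDerivWithinAt (fun u : ℝ => (u : ℂ)) 1 (Set.Icc 0 s) u := by
          simpa using ((hasDerivAt_id u).ofReal_comp).hasDerivWithinAt
        exact ((hderiv u huS).mono (Set.Icc_subset_Icc le_rfl hsS')).add hid)
      (fun u hu => by
        have huS : u ∈ Set.Icc (0:ℝ) S := ⟨hu.1, hu.2.trans hsS'⟩
        have h1 := hmod u huS 0 h0S
        rw [hγ'0, sub_neg_eq_add, sub_zero, _root_.abs_of_nonneg hu.1] at h1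
        exact h1.trans (hωmono u s hu.1 hu.2))
      ⟨le_rfl, hs0.le⟩ ⟨hs0.le, le_rfl⟩
    simpa [hγ0, _root_.abs_of_pos hs0] using key
  -- set up A and B
  set A : ℂ := -γ' s with hAdef
  set B : ℂ := -γ s with hBdef
  have hAsub : ‖A - 1‖ ≤ δ := by
    have : A - 1 = -(γ' s + 1) := by rw [hAdef]; ring
    rw [this, norm_neg]; exact hA1
  have hBsub : ‖B - s‖ ≤ δ * s := by
    have : B - (s : ℂ) = -(γ s + s) := by rw [hBdef]; ring
    rw [this, norm_neg]; exact hγs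
  -- real/imaginary part bounds
  have hAre : 1 - δ ≤ A.re := by
    have h1 : |(A - 1).re| ≤ δ := le_trans (Complex.abs_re_le_norm _) hAsub
    have h2 : (A - 1).re = A.re - 1 := by simp
    rw [h2, abs_le] at h1; linarith [h1.1]
  have hAim : |A.im| ≤ δ := by
    have h1 : |(A - 1).im| ≤ δ := le_trans (Complex.abs_im_le_norm _) hAsub
    simpa using h1
  have hAre0 : 0 < A.re := by linarith
  have hBre : s * (1 - δ) ≤ B.re := by
    have h1 : |(B - s).re| ≤ δ * s := le_trans (Complex.abs_re_le_norm _) hBsub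
    have h2 : (B - (s:ℂ)).re = B.re - s := by simp
    rw [h2, abs_le] at h1; nlinarith [h1.1]
  have hBim : |B.im| ≤ δ * s := by
    have h1 : |(B - s).im| ≤ δ * s := le_trans (Complex.abs_im_le_norm _) hBsub
    simpa using h1
  have hBre0 : 0 < B.re := lt_of_lt_of_le (by nlinarith) hBre
  -- argument bounds
  have hargA : |A.arg| ≤ 5/4 * δ := by
    refine le_trans (abs_arg_le_im_div_re hAre0) ?_
    rw [div_le_iff₀ hAre0]
    nlinarith [abs_nonneg A.im]
  have hargB : |B.arg| ≤ 5/4 * δ := by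
    refine le_trans (abs_arg_le_im_div_re hBre0) ?_
    rw [div_le_iff₀ hBre0]
    nlinarith [abs_nonneg B.im, mul_nonneg hδ0 hs0.le]
  have hA0 : A ≠ 0 := fun h => by rw [h] at hAre0; simp at hAre0
  have hB0 : B ≠ 0 := fun h => by rw [h] at hBre0; simp at hBre0
  have hBslit : B ∈ Complex.slitPlane := Complex.mem_slitPlane_iff.2 (Or.inl hBre0)
  -- compute the derivative
  have hd1 : HasDerivWithinAt (fun u : ℝ => -γ u) A (Set.Icc 0 S) s := (hderiv s hsS).neg
  have hd2 : HasDerivWithinAt (fun u : ℝ => (-γ u) ^ ((1:ℂ)/2))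
      (((1:ℂ)/2) * B ^ ((1:ℂ)/2 - 1) * A) (Set.Icc 0 S) s :=
    (Complex.hasStrictDerivAt_cpow_const (c := (1:ℂ)/2) hBslit).hasDerivAt.comp_hasDerivWithinAt (h := fun u : ℝ => -γ u) s hd1
  have hd3 : HasDerivWithinAt (fun u : ℝ => sqrtH (γ u))
      (Complex.I * (((1:ℂ)/2) * B ^ ((1:ℂ)/2 - 1) * A)) (Set.Icc 0 S) s := by
    simpa [sqrtH] using hd2.const_mul Complex.I
  rw [hd3.derivWithin (uniqueDiffOn_Icc hS s hsS)]
  -- rewrite the derivative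
  set w : ℂ := B ^ ((1:ℂ)/2) with hwdef
  have hexp : B ^ ((1:ℂ)/2 - 1) = w⁻¹ := by
    rw [show ((1:ℂ)/2 - 1) = -((1:ℂ)/2) by norm_num, Complex.cpow_neg, hwdef]
  have hw0 : w ≠ 0 := by
    rw [hwdef, Ne, Complex.cpow_eq_zero_iff]
    intro h; exact hB0 h.1
  have hargw : w.arg = B.arg / 2 := arg_cpow_half B
  have hargw_abs : |w.arg| ≤ 5/8 * δ := by
    rw [hargw, abs_div]
    rw [abs_of_pos (by norm_num : (0:ℝ) < 2)] -- |2| = 2 ... careful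
    linarith [hargB]
  have hpi : (3:ℝ) < Real.pi := Real.pi_gt_three
  have hwinv : (w⁻¹).arg = -w.arg := by
    rw [Complex.arg_inv]
    split_ifs with h
    · exfalso; rw [h] at hargw_abs
      have : |Real.pi| = Real.pi := _root_.abs_of_pos Real.pi_pos
      rw [this] at hargw_abs; nlinarith
    · rfl
  -- ζ = A * w⁻¹
  have hζ0 : A * w⁻¹ ≠ 0 := mul_ne_zero hA0 (inv_ne_zero hw0)
  have hargζ : (A * w⁻¹).arg = A.arg - w.arg := by
    have hmem : A.arg + (w⁻¹).arg ∈ Set.Ioc (-Real.pi) Real.pi := by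
      rw [hwinv]
      obtain ⟨ha1, ha2⟩ := abs_le.1 hargA
      obtain ⟨hw1, hw2⟩ := abs_le.1 hargw_abs
      constructor
      · linarith
      · linarith
    rw [Complex.arg_mul hA0 (inv_ne_zero hw0) hmem, hwinv]
    ring
  have hargζ_abs : |(A * w⁻¹).arg| ≤ 15/8 * δ := by
    rw [hargζ]
    calc |A.arg - w.arg| ≤ |A.arg| + |w.arg| := abs_sub _ _
    _ ≤ 5/4*δ + 5/8*δ := add_le_add hargA hargw_abs
    _ = 15/8 * δ := by ring
  -- pull out the real factor 1/2 and the factor I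
  have hfactor : Complex.I * (((1:ℂ)/2) * w⁻¹ * A)
      = ((1/2 : ℝ) : ℂ) * (Complex.I * (A * w⁻¹)) := by
    push_cast; ring
  rw [hexp, hfactor, Complex.arg_real_mul _ (by norm_num : (0:ℝ) < 1/2)]
  have hargI : (Complex.I * (A * w⁻¹)).arg = Real.pi/2 + (A * w⁻¹).arg := by
    have hmem : Complex.I.arg + (A * w⁻¹).arg ∈ Set.Ioc (-Real.pi) Real.pi := by
      rw [Complex.arg_I]
      obtain ⟨hz1, hz2⟩ := abs_le.1 hargζ_abs
      constructor
      · linarith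
      · linarith
    rw [Complex.arg_mul Complex.I_ne_zero hζ0 hmem, Complex.arg_I]
  rw [hargI]
  have : Real.pi/2 + (A * w⁻¹).arg - Real.pi/2 = (A * w⁻¹).arg := by ring
  rw [this]
  linarith [hargζ_abs]
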